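/- Let V be a finite set, G a simple graph on V with closed neighborhoods N_v, and fix v ∈ V. Let C = {u ∈ V : 2·|N_u ∩ N_v| > |N_v|}. If there exists u ∈ C with 4·|N_u △ C| > |N_v|, then every partition Π of V satisfies 4·φ(Π) ≥ |N_v|; i.e., no partition has maximum disagreement strictly less than |N_v|/4. -/
import Mathlib


open scoped symmDiff

open Finset

variable {V : Type*} [Fintype V] [DecidableEq V]

/-- Closed neighborhood of `v`: `v` together with its adjacent vertices. -/
def nbhd (G : SimpleGraph V) [DecidableRel G.Adj] (v : V) : Finset V :=
  insert v (G.neighborFinset v)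

/-- `P` encodes a partition of `V`, where `P v` is the block containing `v`. -/
def IsPartitionFun (P : V → Finset V) : Prop :=
  (∀ v, v ∈ P v) ∧ ∀ u v : V, u ∈ P v → P u = P v

/-- Maximum disagreement of the partition `P`. -/
def phi (G : SimpleGraph V) [DecidableRel G.Adj] (P : V → Finset V) : ℕ :=
  Finset.univ.sup fun v => ((P v) ∆ (nbhd G v)).card

theorem statement13 (G : SimpleGraph V) [DecidableRel G.Adj] (v : V)
    (C : Finset V)
    (hC : C = Finset.univ.filter fun u => (nbhd G v).card < 2 * (nbhd G u ∩ nbhd G v).card)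
    (h : ∃ u ∈ C, (nbhd G v).card < 4 * ((nbhd G u) ∆ C).card)
    (P : V → Finset V) (hP : IsPartitionFun P) :
    (nbhd G v).card ≤ 4 * phi G P := by
  by_contra hlt
  push_neg at hlt
  have hφ : ∀ w, ((P w) ∆ (nbhd G w)).card ≤ phi G P := fun w => Finset.le_sup (f := fun w => ((P w) ∆ (nbhd G w)).card) (mem_univ w)
  have hφ1 : ∀ w, ((P w) \ (nbhd G w)).card ≤ phi G P := fun w =>
    le_trans (card_le_card (by rw [symmDiff_def]; exact subset_union_left)) (hφ w)
  have hφ2 : ∀ w, ((nbhd G w) \ (P w)).card ≤ phi G P := fun w =>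
    le_trans (card_le_card (by rw [symmDiff_def]; exact subset_union_right)) (hφ w)
  obtain ⟨hmem, hblock⟩ := hP
  have key : P v = C := by
    ext w
    rw [hC, mem_filter]
    constructor
    · intro hw
      refine ⟨mem_univ w, ?_⟩
      have hPw : P w = P v := hblock w v hw
      have h1 : nbhd G v \ nbhd G w ⊆ (nbhd G v \ P v) ∪ (P v \ nbhd G w) := by
        intro x hx
        simp only [mem_sdiff, mem_union] at hx ⊢
        by_cases hxP : x ∈ P v
        · exact Or.inr ⟨hxP, hx.2⟩
        · exact Or.inl ⟨hx.1, hxP⟩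
      have h2 : (nbhd G v \ nbhd G w).card ≤ 2 * phi G P := by
        have hb : (P v \ nbhd G w).card ≤ phi G P := by rw [← hPw]; exact hφ1 w
        calc (nbhd G v \ nbhd G w).card
            ≤ ((nbhd G v \ P v) ∪ (P v \ nbhd G w)).card := card_le_card h1
          _ ≤ (nbhd G v \ P v).card + (P v \ nbhd G w).card := card_union_le _ _
          _ ≤ phi G P + phi G P := Nat.add_le_add (hφ2 v) hb
          _ = 2 * phi G P := by ring
      have h3 : (nbhd G w ∩ nbhd G v).card + (nbhd G v \ nbhd G w).card = (nbhd G v).card := by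
        rw [inter_comm]; exact card_inter_add_card_sdiff _ _
      omega
    · rintro ⟨-, hw⟩
      by_contra hwP
      have hdisj : ∀ x, x ∈ P w → x ∉ P v := by
        intro x hxw hxv
        have heq : P w = P v := (hblock x w hxw).symm.trans (hblock x v hxv)
        exact hwP (heq ▸ hmem w)
      have h1 : nbhd G w ∩ nbhd G v ⊆ (nbhd G v \ P v) ∪ (nbhd G w \ P w) := by
        intro x hx
        simp only [mem_inter] at hx
        simp only [mem_union, mem_sdiff]
        by_cases hxP : x ∈ P v
        · exact Or.inr ⟨hx.1, fun hxw => hdisj x hxw hxP⟩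
        · exact Or.inl ⟨hx.2, hxP⟩
      have h2 : (nbhd G w ∩ nbhd G v).card ≤ 2 * phi G P := by
        calc (nbhd G w ∩ nbhd G v).card
            ≤ ((nbhd G v \ P v) ∪ (nbhd G w \ P w)).card := card_le_card h1
          _ ≤ (nbhd G v \ P v).card + (nbhd G w \ P w).card := card_union_le _ _
          _ ≤ phi G P + phi G P := Nat.add_le_add (hφ2 v) (hφ2 w)
          _ = 2 * phi G P := by ring
      omega
  obtain ⟨u, huC, hu⟩ := h
  have hPu : P u = C := by
    rw [← key] at huC ⊢
    exact hblock u v huC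
  have hle : ((nbhd G u) ∆ C).card ≤ phi G P := by
    rw [← hPu, symmDiff_comm]
    exact hφ u
  omega
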